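/- Conormal modules are compatible with flat base change: let A be a commutative ring, I ⊆ A an ideal, and A → A' a flat ring map, with I' := I·A'. Then there is a natural isomorphism of A'/I'-modules (I/I²) ⊗_{A/I} (A'/I') ≅ I'/I'². -/

import Mathlib

open TensorProduct

universe u

section Aux
variable (A A' : Type u) [CommRing A] [CommRing A'] [Algebra A A']
    [Module.Flat A A'] (I : Ideal A)

/-- Flat base change of an ideal: `A' ⊗[A] I ≃ I·A'`. -/
noncomputable def flatIdealEquiv :
    (A' ⊗[A] (I : Submodule A A)) ≃ₗ[A'] (I.map (algebraMap A A') : Submodule A' A') := by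
  let f : A' ⊗[A] I →ₗ[A'] A' :=
    (TensorProduct.AlgebraTensorModule.rid A A' A').toLinearMap ∘ₗ (I.subtype.baseChange A')
  have hf : Function.Injective f := by
    refine (TensorProduct.AlgebraTensorModule.rid A A' A').injective.comp ?_
    have := Module.Flat.lTensor_preserves_injective_linearMap (M := A')
      I.subtype Subtype.val_injective
    exact this
  have hfx : ∀ (x : A') (i : I), f (x ⊗ₜ i) = (i : A) • x := fun x i => rfl
  have hrange : LinearMap.range f = (I.map (algebraMap A A') : Submodule A' A') := by
    apply le_antisymm
    · rintro _ ⟨y, rfl⟩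
      induction y using TensorProduct.induction_on with
      | zero => simp
      | tmul x i =>
        rw [hfx]
        have : (i : A) • x = x * algebraMap A A' i := by
          rw [Algebra.smul_def, mul_comm]
        rw [this]
        exact Ideal.mul_mem_left _ _ (Ideal.mem_map_of_mem _ i.2)
      | add a b ha hb => rw [map_add]; exact add_mem ha hb
    · rw [Ideal.map]
      rw [Ideal.span_le]
      rintro _ ⟨i, hi, rfl⟩
      exact ⟨(1 : A') ⊗ₜ ⟨i, hi⟩, by rw [hfx]; simp [Algebra.smul_def]⟩
  exact (LinearEquiv.ofInjective f hf).trans (LinearEquiv.ofEq _ _ hrange)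

end Aux



theorem stmt_15_aux (A A' : Type u) [CommRing A] [CommRing A'] [Algebra A A']
    [Module.Flat A A'] (I : Ideal A)
    [Algebra (A ⧸ I) (A' ⧸ I.map (algebraMap A A'))]
    [IsScalarTower A (A ⧸ I) (A' ⧸ I.map (algebraMap A A'))] :
    Nonempty
      (((A' ⧸ I.map (algebraMap A A')) ⊗[A ⧸ I] I.Cotangent)
        ≃ₗ[A' ⧸ I.map (algebraMap A A')] (I.map (algebraMap A A')).Cotangent) := by
  have : @IsScalarTower A (A ⧸ I) I.Cotangent _ _ (@SMulZeroClass.toSMul _ _ _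
      (@DistribSMul.toSMulZeroClass _ _ _ (@DistribMulAction.toDistribSMul _ _ _ _
        (@Module.toDistribMulAction _ _ _ _ (Submodule.Quotient.module (I • ⊤ : Submodule A I)))))) :=
    ⟨fun a b x => (inferInstance : IsScalarTower A (A ⧸ I) I.Cotangent).smul_assoc a b x⟩
  have : @IsScalarTower A' (A' ⧸ I.map (algebraMap A A')) (I.map (algebraMap A A')).Cotangent _ _
      (@SMulZeroClass.toSMul _ _ _
      (@DistribSMul.toSMulZeroClass _ _ _ (@DistribMulAction.toDistribSMul _ _ _ _
        (@Module.toDistribMulAction _ _ _ _ (Submodule.Quotient.module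
          (I.map (algebraMap A A') • ⊤ : Submodule A' (I.map (algebraMap A A')))))))) :=
    ⟨fun a b x => (inferInstance : IsScalarTower A' (A' ⧸ I.map (algebraMap A A'))
      (I.map (algebraMap A A')).Cotangent).smul_assoc a b x⟩
  let e0 : (((A ⧸ I) ⊗[A] (I : Submodule A A)) ≃ₗ[A ⧸ I] I.Cotangent) :=
    (TensorProduct.quotTensorEquivQuotSMul (I : Submodule A A) I).extendScalarsOfSurjective
      Ideal.Quotient.mk_surjective
  let e2 : (((A' ⧸ I.map (algebraMap A A')) ⊗[A'] (I.map (algebraMap A A') : Submodule A' A'))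
      ≃ₗ[A' ⧸ I.map (algebraMap A A')] (I.map (algebraMap A A')).Cotangent) :=
    (TensorProduct.quotTensorEquivQuotSMul (I.map (algebraMap A A') : Submodule A' A')
      (I.map (algebraMap A A'))).extendScalarsOfSurjective Ideal.Quotient.mk_surjective
  let c1 : ((A' ⧸ I.map (algebraMap A A')) ⊗[A ⧸ I] I.Cotangent)
      ≃ₗ[A' ⧸ I.map (algebraMap A A')]
      (A' ⧸ I.map (algebraMap A A')) ⊗[A ⧸ I] ((A ⧸ I) ⊗[A] (I : Submodule A A)) :=
    TensorProduct.AlgebraTensorModule.congr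
      (LinearEquiv.refl (A' ⧸ I.map (algebraMap A A')) (A' ⧸ I.map (algebraMap A A'))) e0.symm
  let c2 : ((A' ⧸ I.map (algebraMap A A')) ⊗[A ⧸ I] ((A ⧸ I) ⊗[A] (I : Submodule A A)))
      ≃ₗ[A' ⧸ I.map (algebraMap A A')]
      (A' ⧸ I.map (algebraMap A A')) ⊗[A] (I : Submodule A A) :=
    TensorProduct.AlgebraTensorModule.cancelBaseChange A (A ⧸ I)
      (A' ⧸ I.map (algebraMap A A')) (A' ⧸ I.map (algebraMap A A')) (I : Submodule A A)
  let c3 : ((A' ⧸ I.map (algebraMap A A')) ⊗[A'] (I.map (algebraMap A A') : Submodule A' A'))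
      ≃ₗ[A' ⧸ I.map (algebraMap A A')]
      (A' ⧸ I.map (algebraMap A A')) ⊗[A'] (A' ⊗[A] (I : Submodule A A)) :=
    TensorProduct.AlgebraTensorModule.congr
      (LinearEquiv.refl (A' ⧸ I.map (algebraMap A A')) (A' ⧸ I.map (algebraMap A A')))
      (flatIdealEquiv A A' I).symm
  let c4 : ((A' ⧸ I.map (algebraMap A A')) ⊗[A'] (A' ⊗[A] (I : Submodule A A)))
      ≃ₗ[A' ⧸ I.map (algebraMap A A')]
      (A' ⧸ I.map (algebraMap A A')) ⊗[A] (I : Submodule A A) :=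
    TensorProduct.AlgebraTensorModule.cancelBaseChange A A'
      (A' ⧸ I.map (algebraMap A A')) (A' ⧸ I.map (algebraMap A A')) (I : Submodule A A)
  exact ⟨c1 ≪≫ₗ c2 ≪≫ₗ (c3 ≪≫ₗ c4).symm ≪≫ₗ e2⟩

theorem stmt_15 (A A' : Type u) [CommRing A] [CommRing A'] [Algebra A A']
    [Module.Flat A A'] (I : Ideal A) :
    letI : Algebra (A ⧸ I) (A' ⧸ I.map (algebraMap A A')) :=
      (Ideal.quotientMap (I.map (algebraMap A A')) (algebraMap A A')
        Ideal.le_comap_map).toAlgebra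
    Nonempty
      (((A' ⧸ I.map (algebraMap A A')) ⊗[A ⧸ I] I.Cotangent)
        ≃ₗ[A' ⧸ I.map (algebraMap A A')] (I.map (algebraMap A A')).Cotangent) := by
  letI : Algebra (A ⧸ I) (A' ⧸ I.map (algebraMap A A')) :=
    (Ideal.quotientMap (I.map (algebraMap A A')) (algebraMap A A')
      Ideal.le_comap_map).toAlgebra
  haveI : IsScalarTower A (A ⧸ I) (A' ⧸ I.map (algebraMap A A')) :=
    IsScalarTower.of_algebraMap_eq fun a => by
      rw [RingHom.algebraMap_toAlgebra, Ideal.Quotient.algebraMap_eq, Ideal.quotientMap_mk]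
      rfl
  exact stmt_15_aux A A' I
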